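/- Let α, c, a, b, p, q be real numbers and let R be the 2×4 real matrix with rows (a, b, −p, −q) and (−2q + αb, 2p − αa, 2cb + αq, −(2ca + αp)). If it is not the case that both 2(ap + bq) = α(a² + b²) and p² + q² + c(a² + b²) = 0, then R has rank 2. -/

import Mathlib

open Matrix

lemma rank_two_of_minor (R : Matrix (Fin 2) (Fin 4) ℝ) (j k : Fin 4)
    (hd : R 0 j * R 1 k - R 0 k * R 1 j ≠ 0) : R.rank = 2 := by
  have hli : LinearIndependent ℝ R.row := by
    rw [Fintype.linearIndependent_iff]
    intro g hg
    have h1 := congrFun hg j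
    have h2 := congrFun hg k
    simp [Fin.sum_univ_two] at h1 h2
    have hg0 : g 0 * (R 0 j * R 1 k - R 0 k * R 1 j) = 0 := by
      linear_combination R 1 k * h1 - R 1 j * h2
    have hg1 : g 1 * (R 0 j * R 1 k - R 0 k * R 1 j) = 0 := by
      linear_combination R 0 j * h2 - R 0 k * h1
    have h0 : g 0 = 0 := (mul_eq_zero.mp hg0).resolve_right hd
    have h1' : g 1 = 0 := (mul_eq_zero.mp hg1).resolve_right hd
    intro i; fin_cases i <;> assumption
  simpa using hli.rank_matrix

/-- the 2×4 matrix R with rows (a, b, −p, −q) and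
(−2q + αb, 2p − αa, 2cb + αq, −(2ca + αp)) has rank 2 unless both
2(ap + bq) = α(a² + b²) and p² + q² + c(a² + b²) = 0. -/
theorem noncharacteristic_rank_two
    (α c a b p q : ℝ)
    (R : Matrix (Fin 2) (Fin 4) ℝ)
    (hR : R = !![a, b, -p, -q;
                 -2 * q + α * b, 2 * p - α * a, 2 * c * b + α * q, -(2 * c * a + α * p)])
    (h : ¬ (2 * (a * p + b * q) = α * (a ^ 2 + b ^ 2) ∧
            p ^ 2 + q ^ 2 + c * (a ^ 2 + b ^ 2) = 0)) :
    R.rank = 2 := by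
  subst hR
  by_cases hE1 : 2 * (a * p + b * q) = α * (a ^ 2 + b ^ 2)
  · have hE2 : p ^ 2 + q ^ 2 + c * (a ^ 2 + b ^ 2) ≠ 0 := fun hE2 => h ⟨hE1, hE2⟩
    by_cases h14 : a * (-(2 * c * a + α * p)) - (-q) * (-2 * q + α * b) = 0
    · apply rank_two_of_minor _ 1 2
      simp only [Matrix.cons_val', Matrix.cons_val_zero, Matrix.cons_val_one,
        Matrix.head_cons, Matrix.head_fin_const, Matrix.cons_val_fin_one, Matrix.empty_val',
        Matrix.of_apply, Matrix.cons_val_two, Matrix.cons_val_three, Matrix.tail_cons]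
      intro h23
      apply hE2
      linear_combination (h23 - h14) / 2
    · apply rank_two_of_minor _ 0 3
      simp only [Matrix.cons_val', Matrix.cons_val_zero, Matrix.cons_val_one,
        Matrix.head_cons, Matrix.head_fin_const, Matrix.cons_val_fin_one, Matrix.empty_val',
        Matrix.of_apply, Matrix.cons_val_two, Matrix.cons_val_three, Matrix.tail_cons]
      exact h14
  · apply rank_two_of_minor _ 0 1
    simp only [Matrix.cons_val', Matrix.cons_val_zero, Matrix.cons_val_one,
        Matrix.head_cons, Matrix.head_fin_const, Matrix.cons_val_fin_one, Matrix.empty_val',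
        Matrix.of_apply, Matrix.cons_val_two, Matrix.cons_val_three, Matrix.tail_cons]
    intro h01
    apply hE1
    linear_combination h01
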